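/- Let D be a dimensional dual hyperoval of rank n ≥ 3 with ambient space V = F_q^{2n}, let σ be a non-degenerate symmetric bilinear form on V, and let D^† = {X^† : X ∈ D} where X^† = {v ∈ V : σ(x,v) = 0 for all x ∈ X}. Then the kernel of D^†, i.e., the set of additive endomorphisms ε of V with (X^†)^ε ⊆ X^† for all X ∈ D, consists exactly of the scalar maps and is isomorphic to F_q. -/

import Mathlib

open Module

/-- Geometric sum identity over `ℕ`. -/
private lemma dho_geom_nat (q n : ℕ) (hq : 1 ≤ q) :
    (∑ i ∈ Finset.range n, q ^ i) * (q - 1) = q ^ n - 1 := by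
  have h1 : 1 ≤ q ^ n := Nat.one_le_pow _ _ hq
  have hz : ((∑ i ∈ Finset.range n, q ^ i : ℕ) : ℤ) * ((q : ℤ) - 1) = (q : ℤ) ^ n - 1 := by
    push_cast
    exact geom_sum_mul (q : ℤ) n
  have : (((∑ i ∈ Finset.range n, q ^ i) * (q - 1) : ℕ) : ℤ) = ((q ^ n - 1 : ℕ) : ℤ) := by
    rw [Nat.cast_mul, Nat.cast_sub hq, Nat.cast_sub h1]
    push_cast
    push_cast at hz
    linarith [hz]
  exact_mod_cast this

/-- Covering lemma: every nonzero vector of a member of a DHO lies in a second member. -/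
private lemma dho_cover {n : ℕ} {F V : Type*} [Field F] [Fintype F]
    [AddCommGroup V] [Module F V] [FiniteDimensional F V]
    (D : Set (Submodule F V))
    (hrank : ∀ X ∈ D, Module.finrank F X = n)
    (hD1 : ∀ X ∈ D, ∀ Y ∈ D, X ≠ Y → Module.finrank F ↥(X ⊓ Y) = 1)
    (hD2 : ∀ X ∈ D, ∀ Y ∈ D, ∀ Z ∈ D, X ≠ Y → Y ≠ Z → X ≠ Z → X ⊓ Y ⊓ Z = ⊥)
    (hD3 : D.ncard = (∑ i ∈ Finset.range n, Fintype.card F ^ i) + 1)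
    {X : Submodule F V} (hX : X ∈ D) {x : V} (hx : x ∈ X) (hx0 : x ≠ 0) :
    ∃ Y ∈ D, Y ≠ X ∧ x ∈ Y := by
  classical
  haveI : Finite V := Module.finite_of_finite F
  haveI : Fintype V := Fintype.ofFinite V
  haveI : Finite (Submodule F V) :=
    Finite.of_injective (fun W : Submodule F V => (W : Set V)) SetLike.coe_injective
  have hDfin : D.Finite := Set.toFinite D
  set q := Fintype.card F with hqdef
  have hq1 : 1 ≤ q := Fintype.card_pos
  set Df : Finset (Submodule F V) := hDfin.toFinset with hDf
  have hXDf : X ∈ Df := hDfin.mem_toFinset.mpr hX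
  have hcard : Df.card = (∑ i ∈ Finset.range n, q ^ i) + 1 := by
    rw [← Set.ncard_eq_toFinset_card D hDfin]; exact hD3
  set E : Finset (Submodule F V) := Df.erase X with hE
  have hEcard : E.card = ∑ i ∈ Finset.range n, q ^ i := by
    rw [hE, Finset.card_erase_of_mem hXDf, hcard]
    omega
  set A : Submodule F V → Finset V :=
    fun Y => Set.toFinset ((X ⊓ Y : Submodule F V) : Set V) \ {0} with hA
  have hED : ∀ Y ∈ E, Y ∈ D ∧ Y ≠ X := by
    intro Y hY
    exact ⟨hDfin.mem_toFinset.mp (Finset.mem_of_mem_erase hY), Finset.ne_of_mem_erase hY⟩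
  have hAcard : ∀ Y ∈ E, (A Y).card = q - 1 := by
    intro Y hY
    obtain ⟨hYD, hYX⟩ := hED Y hY
    have h1 : Module.finrank F ↥(X ⊓ Y) = 1 := hD1 X hX Y hYD (Ne.symm hYX)
    have h2 : (Set.toFinset ((X ⊓ Y : Submodule F V) : Set V)).card = q := by
      rw [Set.toFinset_card]
      have : Fintype.card ↥((X ⊓ Y : Submodule F V) : Set V)
          = Fintype.card ↥(X ⊓ Y) := rfl
      rw [this, card_eq_pow_finrank (K := F), h1, pow_one]
    have h0 : ({0} : Finset V) ⊆ Set.toFinset ((X ⊓ Y : Submodule F V) : Set V) := by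
      intro z hz
      rw [Finset.mem_singleton] at hz
      subst hz
      simp [Set.mem_toFinset]
    rw [hA]
    rw [Finset.card_sdiff_of_subset h0, h2, Finset.card_singleton]
  have hdisj : ∀ Y ∈ E, ∀ Z ∈ E, Y ≠ Z → Disjoint (A Y) (A Z) := by
    intro Y hY Z hZ hYZ
    obtain ⟨hYD, hYX⟩ := hED Y hY
    obtain ⟨hZD, hZX⟩ := hED Z hZ
    rw [Finset.disjoint_left]
    intro v hvY hvZ
    rw [hA, Finset.mem_sdiff, Set.mem_toFinset, Finset.mem_singleton] at hvY hvZ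
    have hmem : v ∈ (X ⊓ Y ⊓ Z : Submodule F V) := ⟨hvY.1, (hvZ.1 : v ∈ (X ⊓ Z : Submodule F V)).2⟩
    rw [hD2 X hX Y hYD Z hZD (Ne.symm hYX) hYZ (Ne.symm hZX)] at hmem
    exact hvY.2 hmem
  set T : Finset V := Set.toFinset (X : Set V) \ {0} with hT
  have hTcard : T.card = q ^ n - 1 := by
    have h2 : (Set.toFinset (X : Set V)).card = q ^ n := by
      rw [Set.toFinset_card]
      have : Fintype.card ↥((X : Set V)) = Fintype.card ↥X := rfl
      rw [this, card_eq_pow_finrank (K := F), hrank X hX]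
    have h0 : ({0} : Finset V) ⊆ Set.toFinset (X : Set V) := by
      intro z hz
      rw [Finset.mem_singleton] at hz
      subst hz
      simp [Set.mem_toFinset]
    rw [hT, Finset.card_sdiff_of_subset h0, h2, Finset.card_singleton]
  have hsub : E.biUnion A ⊆ T := by
    intro v hv
    obtain ⟨Y, hY, hvY⟩ := Finset.mem_biUnion.mp hv
    rw [hA, Finset.mem_sdiff, Set.mem_toFinset, Finset.mem_singleton] at hvY
    rw [hT, Finset.mem_sdiff, Set.mem_toFinset, Finset.mem_singleton]
    exact ⟨hvY.1.1, hvY.2⟩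
  have hUcard : (E.biUnion A).card = (∑ i ∈ Finset.range n, q ^ i) * (q - 1) := by
    rw [Finset.card_biUnion hdisj]
    rw [Finset.sum_congr rfl hAcard, Finset.sum_const, smul_eq_mul, hEcard]
  have hUT : E.biUnion A = T := by
    apply Finset.eq_of_subset_of_card_le hsub
    rw [hTcard, hUcard, dho_geom_nat q n hq1]
  have hxT : x ∈ T := by
    rw [hT, Finset.mem_sdiff, Set.mem_toFinset, Finset.mem_singleton]
    exact ⟨hx, hx0⟩
  rw [← hUT] at hxT
  obtain ⟨Y, hYE, hYA⟩ := Finset.mem_biUnion.mp hxT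
  obtain ⟨hYD, hYX⟩ := hED Y hYE
  rw [hA, Finset.mem_sdiff, Set.mem_toFinset] at hYA
  exact ⟨Y, hYD, hYX, (hYA.1 : x ∈ (X ⊓ Y : Submodule F V)).2⟩

/-- Let `D` be a DHO of rank `n ≥ 3` with ambient space `V = F_q^{2n}`,
`σ` a non-degenerate symmetric bilinear form on `V`, and `D^† = {X^† : X ∈ D}` where
`X^†` is the `σ`-orthogonal complement of `X`. Then the kernel of `D^†` (the additive
endomorphisms `ε` of `V` with `(X^†)^ε ⊆ X^†` for all `X ∈ D`) consists exactly of the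
scalar maps, hence is isomorphic to `F_q`. -/
theorem dho_dagger_kernel {n : ℕ} {F V : Type*} [Field F] [Fintype F]
    [AddCommGroup V] [Module F V] [FiniteDimensional F V]
    (hn : 3 ≤ n) (hV : Module.finrank F V = 2 * n)
    (σ : V →ₗ[F] V →ₗ[F] F)
    (hsym : ∀ v w : V, σ v w = σ w v)
    (hnd : ∀ v : V, (∀ w : V, σ v w = 0) → v = 0)
    (D : Set (Submodule F V))
    (hrank : ∀ X ∈ D, Module.finrank F X = n)
    (hD1 : ∀ X ∈ D, ∀ Y ∈ D, X ≠ Y → Module.finrank F ↥(X ⊓ Y) = 1)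
    (hD2 : ∀ X ∈ D, ∀ Y ∈ D, ∀ Z ∈ D, X ≠ Y → Y ≠ Z → X ≠ Z → X ⊓ Y ⊓ Z = ⊥)
    (hD3 : D.ncard = (∑ i ∈ Finset.range n, Fintype.card F ^ i) + 1)
    (hambient : (⨆ X ∈ D, X) = (⊤ : Submodule F V)) :
    ∀ ε : V →+ V,
      (∀ X ∈ D, ∀ v : V, (∀ x ∈ X, σ x v = 0) → ∀ x ∈ X, σ x (ε v) = 0)
        ↔ ∃ lam : F, ∀ v, ε v = lam • v := by
  intro ε
  constructor
  · -- hard direction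
    intro hker
    classical
    haveI : Finite V := Module.finite_of_finite F
    set p := ringChar F with hpdef
    haveI : CharP F p := ringChar.charP F
    haveI hpp : Fact p.Prime := ⟨CharP.char_is_prime F p⟩
    letI : Algebra (ZMod p) F := ZMod.algebra F p
    letI : Module (ZMod p) V := Module.compHom V (algebraMap (ZMod p) F)
    have ksmul : ∀ (k : ZMod p) (v : V), k • v = (algebraMap (ZMod p) F k) • v :=
      fun _ _ => rfl
    haveI : IsScalarTower (ZMod p) F V := by
      constructor
      intro k f v
      rw [ksmul, Algebra.smul_def, mul_smul]
    haveI : FiniteDimensional (ZMod p) V := Module.Finite.of_finite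
    haveI : FiniteDimensional (ZMod p) F := Module.Finite.of_finite
    -- the additive map as a `ZMod p`-linear map
    have hksmul : ∀ (k : ZMod p) (v : V), k • v = k.val • v := by
      intro k v
      have hk : ((k.val : ℕ) : ZMod p) = k := by
        rw [ZMod.natCast_val, ZMod.cast_id]
      conv_lhs => rw [← hk]
      rw [Nat.cast_smul_eq_nsmul]
    let εl : V →ₗ[ZMod p] V :=
      { toFun := ε
        map_add' := ε.map_add
        map_smul' := by
          intro k v
          simp only [RingHom.id_apply]
          rw [hksmul, hksmul, AddMonoidHom.map_nsmul] }
    -- a nonzero `ZMod p`-linear functional on `F`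
    obtain ⟨π, c₀, hπ⟩ : ∃ π : F →ₗ[ZMod p] ZMod p, ∃ c : F, π c ≠ 0 := by
      let b := Basis.ofVectorSpace (ZMod p) F
      obtain ⟨i⟩ := b.index_nonempty
      exact ⟨b.coord i, b i, by simp⟩
    -- the π-trick: vanishing of π ∘ σ on a submodule gives vanishing of σ
    have πtrick : ∀ (u : V) (U : Submodule F V),
        (∀ w ∈ U, π (σ u w) = 0) → ∀ w ∈ U, σ u w = 0 := by
      intro u U h w hw
      by_contra hne
      apply hπ
      have : ∀ d : F, π d = 0 := by
        intro d
        have hmem : (d * (σ u w)⁻¹) • w ∈ U := U.smul_mem _ hw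
        have h2 := h _ hmem
        rw [map_smul, smul_eq_mul, mul_assoc, inv_mul_cancel₀ hne, mul_one] at h2
        exact h2
      exact this c₀
    -- the prime-field-valued bilinear form
    let B : LinearMap.BilinForm (ZMod p) V := LinearMap.mk₂ (ZMod p)
      (fun u v => π (σ u v))
      (fun u u' v => by
        show π (σ (u + u') v) = π (σ u v) + π (σ u' v)
        rw [map_add, LinearMap.add_apply, map_add])
      (fun k u v => by
        show π (σ (k • u) v) = k • π (σ u v)
        have h1 : σ (k • u) v = k • (σ u v) := by
          rw [ksmul, map_smul, LinearMap.smul_apply, smul_eq_mul, ← Algebra.smul_def]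
        rw [h1, map_smul])
      (fun u v v' => by
        show π (σ u (v + v')) = π (σ u v) + π (σ u v')
        rw [map_add, map_add])
      (fun k u v => by
        show π (σ u (k • v)) = k • π (σ u v)
        have h1 : σ u (k • v) = k • (σ u v) := by
          rw [ksmul, map_smul, smul_eq_mul, ← Algebra.smul_def]
        rw [h1, map_smul])
    have Bapp : ∀ u v : V, B u v = π (σ u v) := fun u v => rfl
    have Bsymm : ∀ u v : V, B u v = B v u := by
      intro u v
      rw [Bapp, Bapp, hsym]
    have hrefl : B.IsRefl := by
      intro u v h
      rw [Bsymm]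
      exact h
    have hBnd : B.Nondegenerate := by
      refine (LinearMap.IsRefl.nondegenerate_iff_separatingLeft hrefl).mpr ?_
      intro u hu
      apply hnd u
      have h1 : ∀ w ∈ (⊤ : Submodule F V), π (σ u w) = 0 := by
        intro w _
        rw [← Bapp]
        exact hu w
      exact fun w => πtrick u ⊤ h1 w Submodule.mem_top
    -- the transposed endomorphism
    set Φ := B.toDual hBnd with hΦ
    set εs : V → V := fun u => Φ.symm ((Φ u).comp εl) with hεsdef
    have hεs : ∀ u v : V, B (εs u) v = B u (εl v) := by
      intro u v
      have h1 : B (Φ.symm ((Φ u).comp εl)) v = ((Φ u).comp εl) v :=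
        LinearMap.BilinForm.apply_toDual_symm_apply ((Φ u).comp εl) v
      rw [hεsdef]
      simp only []
      rw [h1]
      rfl
    have hεsadd : ∀ u u' : V, εs (u + u') = εs u + εs u' := by
      intro u u'
      rw [hεsdef]
      simp only [map_add, LinearMap.add_comp]
    have hεszero : εs 0 = 0 := by
      rw [hεsdef]
      simp only [map_zero, LinearMap.zero_comp]
    -- the orthogonal of a member has carrier the dagger
    have key_orth : ∀ (X : Submodule F V) (v : V),
        v ∈ B.orthogonal (X.restrictScalars (ZMod p)) ↔ ∀ x ∈ X, σ x v = 0 := by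
      intro X v
      constructor
      · intro hv x hx
        have h1 : ∀ x ∈ X, π (σ v x) = 0 := by
          intro x' hx'
          have h2 := hv x' (by simpa using hx')
          rw [Bapp] at h2
          rw [hsym]
          exact h2
        rw [hsym]
        exact πtrick v X h1 x hx
      · intro h x hx
        have hx' : x ∈ X := by simpa using hx
        show B x v = 0
        rw [Bapp, h x hx', map_zero]
    -- εs preserves each member of D
    have hpres : ∀ X ∈ D, ∀ x ∈ X, εs x ∈ X := by
      intro X hX x hx
      have h1 : εs x ∈ B.orthogonal (B.orthogonal (X.restrictScalars (ZMod p))) := by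
        rw [LinearMap.BilinForm.mem_orthogonal_iff]
        intro w hw
        have hw' : ∀ x' ∈ X, σ x' w = 0 := (key_orth X w).mp hw
        have h2 : ∀ x' ∈ X, σ x' (ε w) = 0 := hker X hX w hw'
        calc B w (εs x) = B (εs x) w := Bsymm w (εs x)
          _ = B x (εl w) := hεs x w
          _ = π (σ x (ε w)) := Bapp x (ε w)
          _ = 0 := by rw [h2 x hx, map_zero]
      rw [LinearMap.BilinForm.orthogonal_orthogonal hBnd hrefl] at h1
      simpa using h1
    -- εs is scalar on each nonzero vector of each member
    have hsc : ∀ X ∈ D, ∀ x ∈ X, x ≠ 0 → ∃ c : F, εs x = c • x := by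
      intro X hX x hx hx0
      obtain ⟨Y, hY, hYX, hxY⟩ := dho_cover D hrank hD1 hD2 hD3 hX hx hx0
      have h1 : εs x ∈ (X ⊓ Y : Submodule F V) := ⟨hpres X hX x hx, hpres Y hY x hxY⟩
      have hr : Module.finrank F ↥(X ⊓ Y) = 1 := hD1 X hX Y hY (Ne.symm hYX)
      have hsp : (F ∙ x) = (X ⊓ Y : Submodule F V) := by
        apply Submodule.eq_of_le_of_finrank_le
        · rw [Submodule.span_le, Set.singleton_subset_iff]
          exact ⟨hx, hxY⟩
        · rw [hr, finrank_span_singleton hx0]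
      rw [← hsp] at h1
      obtain ⟨c, hc⟩ := Submodule.mem_span_singleton.mp h1
      exact ⟨c, hc.symm⟩
    -- the scalar is independent of the vector, within a member, for non-proportional pairs
    have pair : ∀ X ∈ D, ∀ x ∈ X, ∀ y ∈ X, x ≠ 0 → y ∉ (F ∙ x) →
        ∀ cx cy : F, εs x = cx • x → εs y = cy • y → cx = cy := by
      intro X hX x hx y hy hx0 hyx cx cy hcx hcy
      have hy0 : y ≠ 0 := fun h => hyx (h ▸ Submodule.zero_mem _)
      have hxy0 : x + y ≠ 0 := by
        intro h
        apply hyx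
        have : y = (-1 : F) • x := by
          rw [neg_one_smul]
          exact eq_neg_of_add_eq_zero_left (by rwa [add_comm] at h)
        rw [this]
        exact Submodule.smul_mem _ _ (Submodule.mem_span_singleton_self x)
      obtain ⟨c, hc⟩ := hsc X hX (x + y) (X.add_mem hx hy) hxy0
      have heq : (c - cx) • x + (c - cy) • y = 0 := by
        have h := hεsadd x y
        rw [hc, hcx, hcy, smul_add] at h
        calc (c - cx) • x + (c - cy) • y
            = (c • x + c • y) - (cx • x + cy • y) := by
              rw [sub_smul, sub_smul]; abel
          _ = 0 := by rw [h]; exact sub_self _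
      have hcyc : c = cy := by
        by_contra hne
        apply hyx
        have hsub : c - cy ≠ 0 := sub_ne_zero.mpr hne
        have h2 : (c - cy) • y = -((c - cx) • x) := by
          have := heq
          rw [add_comm] at this
          exact eq_neg_of_add_eq_zero_left this
        have h3 : y = ((c - cy)⁻¹ * (-(c - cx))) • x := by
          calc y = (c - cy)⁻¹ • ((c - cy) • y) := by
                rw [smul_smul, inv_mul_cancel₀ hsub, one_smul]
            _ = ((c - cy)⁻¹ * (-(c - cx))) • x := by
                rw [h2, ← neg_smul, smul_smul]
        rw [h3]
        exact Submodule.smul_mem _ _ (Submodule.mem_span_singleton_self x)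
      have hcxc : cy = cx := by
        rw [hcyc, sub_self, zero_smul, add_zero] at heq
        rcases smul_eq_zero.mp heq with h3 | h3
        · exact sub_eq_zero.mp h3
        · exact absurd h3 hx0
      exact hcxc.symm
    -- the scalar is constant on each member
    have hconst : ∀ X ∈ D, ∀ x ∈ X, ∀ y ∈ X, x ≠ 0 → y ≠ 0 →
        ∀ cx cy : F, εs x = cx • x → εs y = cy • y → cx = cy := by
      intro X hX x hx y hy hx0 hy0 cx cy hcx hcy
      by_cases hspan : y ∈ (F ∙ x)
      · -- dependent case: pick a third vector
        have hXne : ¬ (X ≤ (F ∙ x)) := by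
          intro hle
          have h1 : Module.finrank F X ≤ Module.finrank F ↥(F ∙ x) :=
            Submodule.finrank_mono hle
          rw [finrank_span_singleton hx0, hrank X hX] at h1
          omega
        obtain ⟨z, hzX, hzx⟩ := Set.not_subset.mp (fun h => hXne h)
        have hz0 : z ≠ 0 := fun h => hzx (h ▸ Submodule.zero_mem _)
        obtain ⟨cz, hcz⟩ := hsc X hX z hzX hz0
        have h1 : cx = cz := pair X hX x hx z hzX hx0 hzx cx cz hcx hcz
        obtain ⟨a, ha⟩ := Submodule.mem_span_singleton.mp hspan
        have ha0 : a ≠ 0 := by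
          intro h
          rw [h, zero_smul] at ha
          exact hy0 ha.symm
        have hspan2 : (F ∙ y) = (F ∙ x) := by
          rw [← ha]
          exact Submodule.span_singleton_smul_eq (IsUnit.mk0 a ha0) x
        have hzy : z ∉ (F ∙ y) := by rw [hspan2]; exact hzx
        have h2 : cy = cz := pair X hX y hy z hzX hy0 hzy cy cz hcy hcz
        rw [h1, h2]
      · exact pair X hX x hx y hy hx0 hspan cx cy hcx hcy
    -- a global scalar
    have hDne : D.Nonempty := by
      by_contra h
      rw [Set.not_nonempty_iff_eq_empty] at h
      rw [h, Set.ncard_empty] at hD3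
      exact Nat.succ_ne_zero _ hD3.symm
    obtain ⟨X₀, hX₀⟩ := hDne
    have hX₀bot : X₀ ≠ ⊥ := by
      intro h
      have := hrank X₀ hX₀
      rw [h, finrank_bot] at this
      omega
    obtain ⟨x₀, hx₀X, hx₀0⟩ := Submodule.exists_mem_ne_zero_of_ne_bot hX₀bot
    obtain ⟨lam, hlam⟩ := hsc X₀ hX₀ x₀ hx₀X hx₀0
    -- εs equals lam • on every member
    have hmem : ∀ X ∈ D, ∀ x ∈ X, εs x = lam • x := by
      intro X hX x hx
      by_cases hx0 : x = 0
      · rw [hx0, hεszero, smul_zero]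
      · obtain ⟨c, hc⟩ := hsc X hX x hx hx0
        by_cases hXX : X = X₀
        · subst hXX
          have := hconst X hX x hx x₀ hx₀X hx0 hx₀0 c lam hc hlam
          rw [hc, this]
        · have hne : X ≠ X₀ := hXX
          have hr : Module.finrank F ↥(X ⊓ X₀) = 1 := hD1 X hX X₀ hX₀ hne
          have hbot : (X ⊓ X₀ : Submodule F V) ≠ ⊥ := by
            intro h
            rw [h, finrank_bot] at hr
            omega
          obtain ⟨z, hz, hz0⟩ := Submodule.exists_mem_ne_zero_of_ne_bot hbot
          obtain ⟨cz, hcz⟩ := hsc X hX z hz.1 hz0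
          have h1 : c = cz := hconst X hX x hx z hz.1 hx0 hz0 c cz hc hcz
          have h2 : cz = lam := hconst X₀ hX₀ z hz.2 x₀ hx₀X hz0 hx₀0 cz lam hcz hlam
          rw [hc, h1, h2]
    -- εs equals lam • everywhere
    have hall : ∀ v : V, εs v = lam • v := by
      intro v
      have hv : v ∈ sSup D := by
        have h1 : v ∈ (⊤ : Submodule F V) := Submodule.mem_top
        rw [← hambient] at h1
        rwa [sSup_eq_iSup]
      have hv2 : v ∈ (sSup D).toAddSubmonoid := hv
      rw [Submodule.toAddSubmonoid_sSup, sSup_eq_iSup'] at hv2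
      refine AddSubmonoid.iSup_induction (motive := fun w => εs w = lam • w) _ hv2 ?_ ?_ ?_
      · rintro ⟨A, ⟨X, hXD, rfl⟩⟩ x hx
        exact hmem X hXD x hx
      · show εs 0 = lam • 0
        rw [hεszero, smul_zero]
      · intro a b ha hb
        show εs (a + b) = lam • (a + b)
        rw [hεsadd, ha, hb, smul_add]
    -- conclude
    refine ⟨lam, fun v => ?_⟩
    have h1 : ∀ u : V, π (σ u (ε v - lam • v)) = 0 := by
      intro u
      have h2 : B u (εl v) = B (εs u) v := (hεs u v).symm
      rw [hall u] at h2
      have h3 : B (lam • u) v = B u (lam • v) := by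
        rw [Bapp, Bapp]
        have : σ (lam • u) v = σ u (lam • v) := by
          rw [map_smul, LinearMap.smul_apply, map_smul]
        rw [this]
      rw [h3] at h2
      have h4 : σ u (ε v) = σ u (εl v) := rfl
      rw [Bapp, Bapp] at h2
      rw [map_sub, map_sub, h4, h2, sub_self]
    have h5 : ∀ u : V, σ (ε v - lam • v) u = 0 := by
      have h6 : ∀ u ∈ (⊤ : Submodule F V), π (σ (ε v - lam • v) u) = 0 := by
        intro u _
        rw [hsym]
        exact h1 u
      exact fun u => πtrick (ε v - lam • v) ⊤ h6 u Submodule.mem_top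
    have h7 : ε v - lam • v = 0 := hnd _ h5
    exact sub_eq_zero.mp h7
  · -- easy direction
    rintro ⟨lam, hl⟩ X hX v hv x hx
    rw [hl v, map_smul, hv x hx, smul_zero]
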